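/- For every n ≥ 0 and every x ∈ D, setting A := K_n + σ² I_n, u := k_n(x_{n+1}), v := k_n(x), α := κ(x_{n+1}, x), and s := σ² + σ_n²(x_{n+1}), the quadratic form with the block-inverted regularized kernel matrix satisfies k_{n+1}(x)ᵀ (K_{n+1} + σ² I_{n+1})⁻¹ k_{n+1}(x) = vᵀ A⁻¹ v + (α − uᵀ A⁻¹ v)² / s, where k_{n+1}(x) is the concatenation of v and the scalar α. -/

import Mathlib

open Matrix

/-- The `n × n` kernel matrix `K_n = [κ(x_i, x_j)]` built from the first `n`
points of the sequence `xs` (zero-indexed: `xs 0 = x_1`). -/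
noncomputable def kerMat {D : Type*} (κ : D → D → ℝ) (xs : ℕ → D) (n : ℕ) :
    Matrix (Fin n) (Fin n) ℝ :=
  Matrix.of fun i j => κ (xs i) (xs j)

/-- The kernel vector `k_n(x) = [κ(x_i, x)]_{i=1}^n`. -/
noncomputable def kerVec {D : Type*} (κ : D → D → ℝ) (xs : ℕ → D) (n : ℕ) (y : D) :
    Fin n → ℝ :=
  fun i => κ (xs i) y

/-- The posterior variance
`σ_n²(x) = κ(x,x) − k_n(x)ᵀ (K_n + σ² I_n)⁻¹ k_n(x)`;
for `n = 0` this is `κ(x,x)`. -/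
noncomputable def postVar {D : Type*} (κ : D → D → ℝ) (xs : ℕ → D) (σ2 : ℝ)
    (n : ℕ) (y : D) : ℝ :=
  κ y y -
    kerVec κ xs n y ⬝ᵥ
      ((kerMat κ xs n + σ2 • (1 : Matrix (Fin n) (Fin n) ℝ))⁻¹ *ᵥ kerVec κ xs n y)


lemma snoc_dot {n : ℕ} (p q : Fin n → ℝ) (t r : ℝ) :
    Fin.snoc p t ⬝ᵥ Fin.snoc q r = p ⬝ᵥ q + t * r := by
  simp [dotProduct, Fin.sum_univ_castSucc]

lemma kerVec_succ {D : Type*} (κ : D → D → ℝ) (xs : ℕ → D) (n : ℕ) (y : D) :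
    kerVec κ xs (n + 1) y = Fin.snoc (kerVec κ xs n y) (κ (xs n) y) := by
  funext i
  induction i using Fin.lastCases with
  | last => simp [kerVec]
  | cast i => simp [kerVec]

lemma regMat_mulVec_snoc {D : Type*} (κ : D → D → ℝ)
    (hsymm : ∀ a b : D, κ a b = κ b a) (xs : ℕ → D) (σ2 : ℝ) (n : ℕ)
    (p : Fin n → ℝ) (t : ℝ) :
    (kerMat κ xs (n + 1) + σ2 • (1 : Matrix (Fin (n + 1)) (Fin (n + 1)) ℝ)) *ᵥ
        Fin.snoc p t =
      Fin.snoc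
        ((kerMat κ xs n + σ2 • (1 : Matrix (Fin n) (Fin n) ℝ)) *ᵥ p +
          t • kerVec κ xs n (xs n))
        (kerVec κ xs n (xs n) ⬝ᵥ p + t * (κ (xs n) (xs n) + σ2)) := by
  funext i
  induction i using Fin.lastCases with
  | last =>
      simp only [mulVec, dotProduct, Fin.sum_univ_castSucc, Fin.snoc_castSucc,
        Fin.snoc_last, kerMat, kerVec, Matrix.add_apply, Matrix.smul_apply,
        Matrix.one_apply, Matrix.of_apply, Fin.val_last, Fin.coe_castSucc]
      have h1 : ∀ j : Fin n, (Fin.last n = Fin.castSucc j) = False := by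
        intro j; simp [(Fin.castSucc_lt_last j).ne']
      simp only [h1, if_false, if_true, eq_self_iff_true, smul_eq_mul, mul_zero,
        add_zero, mul_one]
      rw [Finset.sum_congr rfl (fun j _ => by rw [hsymm (xs n) (xs (j : ℕ))])]
      ring
  | cast i =>
      simp only [mulVec, dotProduct, Fin.sum_univ_castSucc, Fin.snoc_castSucc,
        Fin.snoc_last, kerMat, kerVec, Matrix.add_apply, Matrix.smul_apply,
        Matrix.one_apply, Matrix.of_apply, Fin.val_last, Fin.coe_castSucc,
        Pi.add_apply, Pi.smul_apply, smul_eq_mul]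
      have h1 : (Fin.castSucc i = Fin.last n) = False := by
        simp [(Fin.castSucc_lt_last i).ne]
      have h2 : ∀ j : Fin n, (Fin.castSucc i = Fin.castSucc j) = (i = j) := by
        intro j; simp [Fin.castSucc_inj]
      simp only [h1, h2, if_false, mul_zero, add_zero]
      ring

/-- Quadratic form with the block-inverted regularized kernel matrix: with
`A = K_n + σ² I_n`, `u = k_n(x_{n+1})`, `v = k_n(x)`, `α = κ(x_{n+1}, x)` and
`s = σ² + σ_n²(x_{n+1})`,
`k_{n+1}(x)ᵀ (K_{n+1} + σ² I_{n+1})⁻¹ k_{n+1}(x) = vᵀ A⁻¹ v + (α − uᵀ A⁻¹ v)² / s`. -/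
theorem quadratic_form_block_inverse {D : Type*} [Nonempty D]
    (κ : D → D → ℝ)
    (hsymm : ∀ a b : D, κ a b = κ b a)
    (hpsd : ∀ (n : ℕ) (z : Fin n → D),
      (Matrix.of fun i j => κ (z i) (z j)).PosSemidef)
    (σ2 : ℝ) (hσ2 : 0 < σ2)
    (xs : ℕ → D) (n : ℕ) (y : D) :
    kerVec κ xs (n + 1) y ⬝ᵥ
        ((kerMat κ xs (n + 1) + σ2 • (1 : Matrix (Fin (n + 1)) (Fin (n + 1)) ℝ))⁻¹ *ᵥ
          kerVec κ xs (n + 1) y) =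
      kerVec κ xs n y ⬝ᵥ
          ((kerMat κ xs n + σ2 • (1 : Matrix (Fin n) (Fin n) ℝ))⁻¹ *ᵥ kerVec κ xs n y) +
        (κ (xs n) y -
            kerVec κ xs n (xs n) ⬝ᵥ
              ((kerMat κ xs n + σ2 • (1 : Matrix (Fin n) (Fin n) ℝ))⁻¹ *ᵥ
                kerVec κ xs n y)) ^ 2 /
          (σ2 + postVar κ xs σ2 n (xs n)) := by
  classical
  simp only [postVar]
  have hσ1 : (σ2 • (1 : Matrix (Fin n) (Fin n) ℝ)).PosDef := by
    rw [smul_one_eq_diagonal]; exact Matrix.posDef_diagonal_iff.2 fun _ => hσ2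
  have hσ1' : (σ2 • (1 : Matrix (Fin (n+1)) (Fin (n+1)) ℝ)).PosDef := by
    rw [smul_one_eq_diagonal]; exact Matrix.posDef_diagonal_iff.2 fun _ => hσ2
  set A := kerMat κ xs n + σ2 • (1 : Matrix (Fin n) (Fin n) ℝ) with hAdef
  set M := kerMat κ xs (n+1) + σ2 • (1 : Matrix (Fin (n+1)) (Fin (n+1)) ℝ) with hMdef
  have hApd : A.PosDef := Matrix.PosDef.posSemidef_add (hpsd n fun i => xs i) hσ1
  have hMpd : M.PosDef := Matrix.PosDef.posSemidef_add (hpsd (n+1) fun i => xs i) hσ1'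
  have hAdet : IsUnit A.det := (Matrix.isUnit_iff_isUnit_det _).1 hApd.isUnit
  have hMdet : IsUnit M.det := (Matrix.isUnit_iff_isUnit_det _).1 hMpd.isUnit
  have hAinv : A * A⁻¹ = 1 := Matrix.mul_nonsing_inv _ hAdet
  have hMinv : M⁻¹ * M = 1 := Matrix.nonsing_inv_mul _ hMdet
  set u := kerVec κ xs n (xs n) with hudef
  set v := kerVec κ xs n y with hvdef
  set α := κ (xs n) y with hαdef
  set c := A⁻¹ *ᵥ u with hcdef
  set w := A⁻¹ *ᵥ v with hwdef
  set d := κ (xs n) (xs n) + σ2 with hddef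
  set s := d - u ⬝ᵥ c with hsdef
  have hAsymm : Aᵀ = A := by
    rw [hAdef]; ext i j
    simp [kerMat, Matrix.one_apply, hsymm (xs (i:ℕ)) (xs (j:ℕ)), eq_comm]
  have hAmulc : A *ᵥ c = u := by
    rw [hcdef, Matrix.mulVec_mulVec, hAinv, Matrix.one_mulVec]
  have hAmulw : A *ᵥ w = v := by
    rw [hwdef, Matrix.mulVec_mulVec, hAinv, Matrix.one_mulVec]
  have hs_pos : 0 < s := by
    have hw0 : (Fin.snoc (-c) 1 : Fin (n+1) → ℝ) ≠ 0 := by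
      intro h
      have := congrFun h (Fin.last n)
      simp at this
    have hq := hMpd.dotProduct_mulVec_pos hw0
    have hm : M *ᵥ Fin.snoc (-c) 1 = Fin.snoc (0 : Fin n → ℝ) s := by
      rw [hMdef, regMat_mulVec_snoc κ hsymm xs σ2 n, ← hAdef, ← hudef]
      have h1 : A *ᵥ (-c) + (1:ℝ) • u = 0 := by
        rw [Matrix.mulVec_neg, hAmulc]; simp
      have h2 : u ⬝ᵥ (-c) + 1 * (κ (xs n) (xs n) + σ2) = s := by
        rw [hsdef, hddef]; simp; ring
      rw [h1, h2]
    rw [hm] at hq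
    simpa [snoc_dot] using hq
  have hs_ne : s ≠ 0 := hs_pos.ne'
  set β := (α - u ⬝ᵥ w) / s with hβdef
  have hβs : β * s = α - u ⬝ᵥ w := div_mul_cancel₀ _ hs_ne
  have hMz : M *ᵥ Fin.snoc (w - β • c) β = Fin.snoc v α := by
    rw [hMdef, regMat_mulVec_snoc κ hsymm xs σ2 n, ← hAdef, ← hudef]
    have h1 : A *ᵥ (w - β • c) + β • u = v := by
      rw [Matrix.mulVec_sub, Matrix.mulVec_smul, hAmulw, hAmulc]
      funext i; simp
    have h2 : u ⬝ᵥ (w - β • c) + β * (κ (xs n) (xs n) + σ2) = α := by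
      rw [dotProduct_sub, dotProduct_smul]
      have h3 : u ⬝ᵥ w - β • (u ⬝ᵥ c) + β * (κ (xs n) (xs n) + σ2)
          = u ⬝ᵥ w + β * s := by
        rw [hsdef, hddef]; simp only [smul_eq_mul]; ring
      rw [h3, hβs]; ring
    rw [h1, h2]
  have hzsol : M⁻¹ *ᵥ kerVec κ xs (n+1) y = Fin.snoc (w - β • c) β := by
    rw [kerVec_succ, ← hvdef, ← hαdef, ← hMz, Matrix.mulVec_mulVec, hMinv,
      Matrix.one_mulVec]
  have hvc : v ⬝ᵥ c = u ⬝ᵥ w := by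
    rw [hcdef, hwdef, Matrix.dotProduct_mulVec, ← Matrix.mulVec_transpose,
      Matrix.transpose_nonsing_inv, hAsymm, dotProduct_comm]
  have hdenom : σ2 + (κ (xs n) (xs n) - u ⬝ᵥ c) = s := by
    rw [hsdef, hddef]; ring
  calc kerVec κ xs (n + 1) y ⬝ᵥ (M⁻¹ *ᵥ kerVec κ xs (n + 1) y)
      = Fin.snoc v α ⬝ᵥ Fin.snoc (w - β • c) β := by
        rw [hzsol, kerVec_succ, ← hvdef, ← hαdef]
    _ = v ⬝ᵥ (w - β • c) + α * β := snoc_dot _ _ _ _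
    _ = v ⬝ᵥ w + β * (α - u ⬝ᵥ w) := by
        rw [dotProduct_sub, dotProduct_smul, hvc]; simp only [smul_eq_mul]; ring
    _ = v ⬝ᵥ w + (α - u ⬝ᵥ w) ^ 2 / s := by
        rw [hβdef]; field_simp
    _ = v ⬝ᵥ w + (α - u ⬝ᵥ w) ^ 2 / (σ2 + (κ (xs n) (xs n) - u ⬝ᵥ c)) := by
        rw [hdenom]
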